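/- Let m, ω, h be real with h > 0 and ω²h² ≠ 8. Set q_m = (1/(1 − ω²h²/8))·(q_ℓ + q_r)/2 and let L_h(q_ℓ, q_m, q_r) = (m·h/12)·(g_ℓ² + 4g_m² + g_r²) − (h/6)·((1/2)mω²q_ℓ² + 4·(1/2)mω²q_m² + (1/2)mω²q_r²), where g_ℓ = (−3q_ℓ + 4q_m − q_r)/h, g_m = (q_r − q_ℓ)/h, g_r = (q_ℓ − 4q_m + 3q_r)/h. Then for all real q_ℓ, q_r: L_h(q_ℓ, q_m, q_r) = (1/(1 − ω²h²/8))·[ (1/2)·m·h·((q_r − q_ℓ)/h)² − (h/2)·mω²·( ((22 − h²ω²)/48)·(q_ℓ² + q_r²) + (1/12)·q_ℓ·q_r ) ]. -/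

import Mathlib

/-- Eliminating the internal degree of freedom from the Simpson discrete Lagrangian
for the harmonic potential yields the reduced Lagrangian. -/
theorem simpson_reduced_lagrangian
    (m ω h : ℝ) (hh : 0 < h) (hstab : ω ^ 2 * h ^ 2 ≠ 8)
    (Lh : ℝ → ℝ → ℝ → ℝ)
    (hLh : ∀ qℓ qm qr : ℝ, Lh qℓ qm qr =
      (m * h / 12) * (((-3 * qℓ + 4 * qm - qr) / h) ^ 2
        + 4 * ((qr - qℓ) / h) ^ 2 + ((qℓ - 4 * qm + 3 * qr) / h) ^ 2)
      - (h / 6) * ((1 / 2) * m * ω ^ 2 * qℓ ^ 2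
        + 4 * ((1 / 2) * m * ω ^ 2 * qm ^ 2) + (1 / 2) * m * ω ^ 2 * qr ^ 2)) :
    ∀ qℓ qr : ℝ,
      Lh qℓ ((1 / (1 - ω ^ 2 * h ^ 2 / 8)) * ((qℓ + qr) / 2)) qr =
        (1 / (1 - ω ^ 2 * h ^ 2 / 8)) *
          ((1 / 2) * m * h * ((qr - qℓ) / h) ^ 2
            - (h / 2) * m * ω ^ 2 *
              (((22 - h ^ 2 * ω ^ 2) / 48) * (qℓ ^ 2 + qr ^ 2)
                + (1 / 12) * qℓ * qr)) := by
  intro qℓ qr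
  have hd : 1 - ω ^ 2 * h ^ 2 / 8 ≠ 0 := by
    intro hc
    apply hstab
    linarith [hc]
  have h8 : (8 : ℝ) - ω ^ 2 * h ^ 2 ≠ 0 := fun hc => hstab (by linarith)
  rw [hLh]
  rw [show (1 : ℝ) / (1 - ω ^ 2 * h ^ 2 / 8) = 8 / (8 - ω ^ 2 * h ^ 2) by
    field_simp]
  have h8' : (8 : ℝ) - h ^ 2 * ω ^ 2 ≠ 0 := by rw [mul_comm]; exact h8
  field_simp
  ring
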